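/- For s > 0 and z, w in the closed right half-plane with z ≠ w and z ≠ w* (where w* = -conj(w)), the kernel satisfies K_s(z,w) = |z - w*|^{-s} · ₂F₁(s/2, 1/2; 1; 1 - |z-w|²/|z-w*|²), where ₂F₁ is the Gauss hypergeometric function. -/

import Mathlib

open Real

open Filter intervalIntegral MeasureTheory

namespace RotKernelAux

/-- `c a n = (a)_n / n!` -/
noncomputable def c (a : ℝ) (n : ℕ) : ℝ := (ascPochhammer ℝ n).eval a / n.factorial

lemma c_zero (a : ℝ) : c a 0 = 1 := by simp [c]

lemma c_succ (a : ℝ) (n : ℕ) : c a (n + 1) = c a n * ((a + n) / (n + 1)) := by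
  have h : (n.factorial : ℝ) ≠ 0 := Nat.cast_ne_zero.2 n.factorial_ne_zero
  have h2 : ((n:ℝ) + 1) ≠ 0 := by positivity
  simp only [c, ascPochhammer_succ_eval, Nat.factorial_succ]
  push_cast
  rw [div_mul_div_comm]
  rw [mul_comm ((n.factorial : ℝ))]

lemma c_pos {a : ℝ} (ha : 0 < a) (n : ℕ) : 0 < c a n := by
  induction n with
  | zero => simp [c_zero]
  | succ n ih =>
    rw [c_succ]
    have : (0:ℝ) < (a + n) / (n + 1) := by positivity
    positivity

lemma c_le_pow {a : ℝ} (ha : 0 < a) {K : ℕ} (haK : a ≤ K + 1) (n : ℕ) :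
    c a n ≤ ((n : ℝ) + 1) ^ K := by
  induction n with
  | zero => simp [c_zero]
  | succ n ih =>
    rw [c_succ]
    have h2 : (0:ℝ) < (n:ℝ) + 1 := by positivity
    have h1 : (a + n) / ((n:ℝ) + 1) ≤ ((n:ℝ) + 1 + K) / ((n:ℝ) + 1) :=
      (div_le_div_iff_of_pos_right h2).mpr (by linarith)
    have hbern : ((n:ℝ) + 1 + K) / ((n:ℝ) + 1) ≤ (1 + 1 / ((n:ℝ) + 1)) ^ K := by
      have h0 : (0:ℝ) ≤ 1/((n:ℝ)+1) := by positivity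
      have := one_add_mul_le_pow (a := 1 / ((n:ℝ)+1)) (by linarith) K
      calc ((n:ℝ) + 1 + K) / ((n:ℝ) + 1) = 1 + (K:ℝ) * (1 / ((n:ℝ)+1)) := by field_simp
        _ ≤ (1 + 1 / ((n:ℝ)+1)) ^ K := this
    calc c a n * ((a + n) / (n + 1))
        ≤ ((n:ℝ) + 1) ^ K * ((1 + 1 / ((n:ℝ) + 1)) ^ K) := by
          apply mul_le_mul ih (h1.trans hbern) (by positivity) (by positivity)
      _ = (((n:ℝ) + 1) * (1 + 1 / ((n:ℝ) + 1))) ^ K := (mul_pow _ _ _).symm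
      _ = (((n:ℕ) + 1 : ℕ) + 1 : ℝ) ^ K := by
          push_cast
          congr 1
          field_simp

/-- summability of `(n+1)^K r^n` for `0 ≤ r < 1`. -/
lemma summable_pow_geo (K : ℕ) {r : ℝ} (hr0 : 0 ≤ r) (hr1 : r < 1) :
    Summable (fun n : ℕ => ((n : ℝ) + 1) ^ K * r ^ n) := by
  have hr : ‖r‖ < 1 := by rwa [Real.norm_eq_abs, abs_of_nonneg hr0]
  have h : ∀ j ∈ Finset.range (K + 1),
      Summable (fun n : ℕ => (K.choose j : ℝ) * ((n : ℝ) ^ j * r ^ n)) := fun j _ =>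
    (summable_pow_mul_geometric_of_norm_lt_one j hr).mul_left _
  have hsum := summable_sum (fun j hj => h j hj)
  refine hsum.congr fun n => ?_
  have hbin : ((n:ℝ) + 1) ^ K = ∑ j ∈ Finset.range (K+1), (K.choose j : ℝ) * (n:ℝ) ^ j := by
    rw [add_pow]
    apply Finset.sum_congr rfl
    intro j _
    rw [one_pow]
    ring
  rw [hbin, Finset.sum_mul]
  apply Finset.sum_congr rfl
  intro j _
  ring


lemma summable_c {a r : ℝ} (ha : 0 < a) (hr0 : 0 ≤ r) (hr1 : r < 1) :
    Summable (fun n : ℕ => c a n * r ^ n) := by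
  obtain ⟨K, hK⟩ : ∃ K : ℕ, a ≤ K + 1 := ⟨⌈a⌉₊, by have := Nat.le_ceil a; linarith⟩
  refine Summable.of_nonneg_of_le (fun n => by have := (c_pos ha n).le; positivity)
    (fun n => ?_) (summable_pow_geo K hr0 hr1)
  exact mul_le_mul_of_nonneg_right (c_le_pow ha hK n) (pow_nonneg hr0 n)

lemma summable_ac {a r : ℝ} (ha : 0 < a) (hr0 : 0 ≤ r) (hr1 : r < 1) :
    Summable (fun n : ℕ => (a + n) * (c a n * r ^ n)) := by
  obtain ⟨K, hK⟩ : ∃ K : ℕ, a ≤ K + 1 := ⟨⌈a⌉₊, by have := Nat.le_ceil a; linarith⟩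
  refine Summable.of_nonneg_of_le
    (fun n => mul_nonneg (by have := Nat.cast_nonneg (α := ℝ) n; linarith)
      (mul_nonneg (c_pos ha n).le (pow_nonneg hr0 n)))
    (fun n => ?_) (((summable_pow_geo (K+1) hr0 hr1)).mul_left (a + 1))
  have h1 : a + (n:ℝ) ≤ (a + 1) * ((n:ℝ) + 1) := by nlinarith [Nat.cast_nonneg (α := ℝ) n]
  have h2 : c a n * r ^ n ≤ ((n:ℝ) + 1) ^ K * r ^ n :=
    mul_le_mul_of_nonneg_right (c_le_pow ha hK n) (pow_nonneg hr0 n)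
  have h3 : (0:ℝ) ≤ c a n * r ^ n := by have := (c_pos ha n).le; positivity
  calc (a + n) * (c a n * r ^ n) ≤ ((a + 1) * ((n:ℝ) + 1)) * (((n:ℝ) + 1) ^ K * r ^ n) := by
        apply mul_le_mul h1 h2 h3 (by positivity)
    _ = (a + 1) * (((n:ℝ) + 1) ^ (K+1) * r ^ n) := by ring

lemma summable_deriv {a r : ℝ} (ha : 0 < a) (hr0 : 0 ≤ r) (hr1 : r < 1) :
    Summable (fun n : ℕ => c a n * ((n : ℝ) * r ^ (n - 1))) := by
  obtain ⟨K, hK⟩ : ∃ K : ℕ, a ≤ K + 1 := ⟨⌈a⌉₊, by have := Nat.le_ceil a; linarith⟩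
  set ρ : ℝ := (1 + r) / 2 with hρ
  have hρ0 : 0 < ρ := by rw [hρ]; linarith
  have hρ1 : ρ < 1 := by rw [hρ]; linarith
  have hrρ : r ≤ ρ := by rw [hρ]; linarith
  refine Summable.of_nonneg_of_le
    (fun n => by
      have := (c_pos ha n).le
      have h2 : (0:ℝ) ≤ (n:ℝ) * r ^ (n-1) := by positivity
      positivity)
    (fun n => ?_) (((summable_pow_geo (K+1) hρ0.le hρ1)).mul_left (1 / ρ))
  have hb : (n:ℝ) * r ^ (n - 1) ≤ ((n:ℝ) + 1) * ρ ^ n / ρ := by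
    cases n with
    | zero => simp; positivity
    | succ m =>
      have h1 : r ^ (m + 1 - 1) ≤ ρ ^ m := by
        simpa using pow_le_pow_left₀ hr0 hrρ m
      have h2 : ((m:ℝ) + 1 + 1) * ρ ^ (m+1) / ρ = ((m:ℝ) + 2) * ρ ^ m := by
        rw [pow_succ]
        field_simp
        ring
      push_cast
      rw [h2]
      have : ((m:ℝ) + 1) * r ^ (m + 1 - 1) ≤ ((m:ℝ) + 1) * ρ ^ m :=
        mul_le_mul_of_nonneg_left h1 (by positivity)
      push_cast at this
      nlinarith [pow_nonneg hρ0.le m]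
  calc c a n * ((n:ℝ) * r ^ (n-1)) ≤ ((n:ℝ) + 1) ^ K * (((n:ℝ) + 1) * ρ ^ n / ρ) := by
        apply mul_le_mul (c_le_pow ha hK n) hb (by positivity) (by positivity)
    _ = 1 / ρ * (((n:ℝ) + 1) ^ (K + 1) * ρ ^ n) := by
        field_simp
        ring


lemma hshift (a y : ℝ) (n : ℕ) :
    c a (n + 1) * (((n:ℕ) + 1 : ℝ) * y ^ n) = (a + n) * (c a n * y ^ n) := by
  rw [c_succ]
  have h2 : ((n:ℝ) + 1) ≠ 0 := by positivity
  field_simp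

/-- the key ODE-type identity `(1-y) D y = a F y`. -/
lemma key_identity (ha : 0 < a) {y : ℝ} (hy0 : 0 ≤ y) (hy1 : y < 1) :
    (1 - y) * (∑' n : ℕ, c a n * ((n : ℝ) * y ^ (n - 1))) =
      a * ∑' n : ℕ, c a n * y ^ n := by
  have hS1 := summable_c ha hy0 hy1
  have hSD := summable_deriv ha hy0 hy1
  have hSD' := summable_ac ha hy0 hy1
  have hSD'' : Summable (fun n : ℕ => (a + ((n:ℕ)+1:ℝ)) * (c a (n+1) * y ^ (n+1))) := by
    have := (summable_nat_add_iff 1).mpr hSD'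
    exact this.congr fun n => by push_cast; ring_nf
  -- step 1 : rewrite D y as a shifted series
  have step1 : (∑' n : ℕ, c a n * ((n : ℝ) * y ^ (n - 1)))
      = ∑' n : ℕ, (a + n) * (c a n * y ^ n) := by
    rw [Summable.tsum_eq_zero_add hSD]
    simp only [Nat.cast_zero, Nat.cast_add, Nat.cast_one, zero_mul, mul_zero, zero_add,
      Nat.add_sub_cancel]
    exact tsum_congr fun n => by simpa using hshift a y n
  rw [step1]
  -- expand (1-y) * S = S - y * S
  rw [sub_mul, one_mul]
  have hyD : y * (∑' n : ℕ, (a + n) * (c a n * y ^ n))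
      = ∑' n : ℕ, (a + n) * (c a n * y ^ (n+1)) := by
    rw [← tsum_mul_left]
    exact tsum_congr fun n => by ring
  rw [hyD]
  have hQ : Summable (fun n : ℕ => (a + n) * (c a n * y ^ (n+1))) := by
    have := hSD'.mul_left y
    exact this.congr fun n => by ring
  have hsub : (∑' n : ℕ, (a + ((n:ℝ)+1)) * (c a (n+1) * y ^ (n+1)))
        - (∑' n : ℕ, (a + n) * (c a n * y ^ (n+1)))
      = ∑' n : ℕ, a * (c a (n+1) * y ^ (n+1)) := by
    rw [← Summable.tsum_sub hSD'' hQ]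
    exact tsum_congr fun n => by linear_combination y * hshift a y n
  rw [Summable.tsum_eq_zero_add hSD']
  have e1 : (∑' n : ℕ, (a + ((n+1:ℕ):ℝ)) * (c a (n+1) * y ^ (n+1)))
      = ∑' n : ℕ, (a + ((n:ℝ)+1)) * (c a (n+1) * y ^ (n+1)) :=
    tsum_congr fun n => by push_cast; ring
  rw [e1, add_sub_assoc, hsub]
  have hmul : Summable (fun n : ℕ => a * (c a n * y ^ n)) := hS1.mul_left a
  rw [← tsum_mul_left, Summable.tsum_eq_zero_add hmul]
  simp [c_zero]

/-- generalized binomial series: `∑ (a)_n/n! tⁿ = (1-t)^{-a}` for `0 ≤ t < 1`, `a > 0`. -/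
theorem tsum_binomial {a : ℝ} (ha : 0 < a) {t : ℝ} (ht0 : 0 ≤ t) (ht1 : t < 1) :
    (∑' n : ℕ, c a n * t ^ n) = (1 - t) ^ (-a) := by
  set r : ℝ := (1 + t) / 2 with hr
  have hr0 : 0 < r := by rw [hr]; linarith
  have hr1 : r < 1 := by rw [hr]; linarith
  have htr : t < r := by rw [hr]; linarith
  -- derivative of the series on Ioo (-r) r
  have hFderiv : ∀ y ∈ Set.Ioo (-r) r,
      HasDerivAt (fun z : ℝ => ∑' n : ℕ, c a n * z ^ n)
        (∑' n : ℕ, c a n * ((n : ℝ) * y ^ (n - 1))) y := by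
    intro y hy
    refine hasDerivAt_tsum_of_isPreconnected (𝕜 := ℝ) (F := ℝ)
      (g := fun n (z : ℝ) => c a n * z ^ n)
      (g' := fun n (z : ℝ) => c a n * ((n : ℝ) * z ^ (n - 1)))
      (u := fun n => c a n * ((n:ℝ) * r ^ (n - 1)))
      (summable_deriv ha hr0.le hr1) isOpen_Ioo isPreconnected_Ioo
      (fun n z hz => ?_) (fun n z hz => ?_) (y₀ := 0) ⟨by linarith, hr0⟩ ?_ hy
    · simpa using (hasDerivAt_pow n z).const_mul (c a n)
    · have hz' : |z| ≤ r := le_of_lt (abs_lt.2 ⟨hz.1, hz.2⟩)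
      have heq : ‖c a n * ((n:ℝ) * z ^ (n-1))‖ = c a n * ((n:ℝ) * |z| ^ (n-1)) := by
        rw [norm_mul, norm_mul, norm_pow]
        simp [Real.norm_eq_abs, abs_of_nonneg (c_pos ha n).le, abs_of_nonneg (Nat.cast_nonneg (α := ℝ) n)]
      rw [heq]
      have h1 : |z| ^ (n-1) ≤ r ^ (n-1) := pow_le_pow_left₀ (abs_nonneg z) hz' _
      have h2 : (0:ℝ) ≤ (n:ℝ) := Nat.cast_nonneg n
      exact mul_le_mul_of_nonneg_left (mul_le_mul_of_nonneg_left h1 h2) (c_pos ha n).le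
    · apply summable_of_ne_finset_zero (s := ({0} : Finset ℕ))
      intro n hn
      simp only [Finset.mem_singleton] at hn
      simp [zero_pow hn]
  -- the auxiliary function G
  have hGderiv : ∀ y ∈ Set.Icc (0:ℝ) t,
      HasDerivAt (fun z : ℝ => (1 - z) ^ a * ∑' n : ℕ, c a n * z ^ n) 0 y := by
    intro y hy
    have hy0 : 0 ≤ y := hy.1
    have hyt : y ≤ t := hy.2
    have hy1 : 1 - y > 0 := by linarith
    have hmem : y ∈ Set.Ioo (-r) r := ⟨by linarith, by linarith⟩
    have h1 : HasDerivAt (fun x : ℝ => 1 - x) (-1) y := (hasDerivAt_id y).const_sub 1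
    have h2 : HasDerivAt (fun u : ℝ => u ^ a) (a * (1 - y) ^ (a - 1)) (1 - y) :=
      Real.hasDerivAt_rpow_const (Or.inl (ne_of_gt hy1))
    have hrpow : HasDerivAt (fun x : ℝ => (1 - x) ^ a) (-(a * (1 - y) ^ (a - 1))) y := by
      have := h2.comp y h1
      rw [show -(a * (1 - y) ^ (a - 1)) = a * (1 - y) ^ (a - 1) * -1 by ring]
      exact this
    have hprod := hrpow.mul (hFderiv y hmem)
    have hzero : -(a * (1 - y) ^ (a - 1)) * (∑' n : ℕ, c a n * y ^ n)
        + (1 - y) ^ a * (∑' n : ℕ, c a n * ((n : ℝ) * y ^ (n - 1))) = 0 := by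
      have hsplit : (1 - y) ^ a = (1 - y) ^ (a - 1) * (1 - y) := by
        rw [← Real.rpow_add_one (ne_of_gt hy1)]
        ring_nf
      have hk := key_identity ha hy0 (by linarith : y < 1)
      rw [hsplit]
      linear_combination (1 - y) ^ (a - 1) * hk
    rw [← hzero]
    exact hprod
  -- G is constant on [0, t]
  have hconst : (1 - t) ^ a * (∑' n : ℕ, c a n * t ^ n)
      = (1 - (0:ℝ)) ^ a * ∑' n : ℕ, c a n * (0:ℝ) ^ n := by
    have := constant_of_has_deriv_right_zero
      (f := fun z : ℝ => (1 - z) ^ a * ∑' n : ℕ, c a n * z ^ n) (a := 0) (b := t)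
      (fun y hy => (hGderiv y hy).continuousAt.continuousWithinAt)
      (fun y hy => (hGderiv y (Set.Ico_subset_Icc_self hy)).hasDerivWithinAt)
    exact this t (Set.right_mem_Icc.2 ht0)
  have hF0 : (∑' n : ℕ, c a n * (0:ℝ) ^ n) = 1 := by
    rw [tsum_eq_single 0 (fun n hn => by simp [zero_pow hn])]
    simp [c_zero]
  have hGt : (1 - t) ^ a * (∑' n : ℕ, c a n * t ^ n) = 1 := by
    rw [hconst, hF0]
    simp
  have hne : (1 - t) ^ a ≠ 0 := ne_of_gt (Real.rpow_pos_of_pos (by linarith) a)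
  rw [Real.rpow_neg (by linarith : (0:ℝ) ≤ 1 - t)]
  field_simp
  linarith [hGt]


lemma prod_eq_c_half (n : ℕ) :
    (∏ i ∈ Finset.range n, (2 * (i:ℝ) + 1) / (2 * i + 2)) = c (1/2) n := by
  induction n with
  | zero => simp [c_zero]
  | succ n ih =>
    rw [Finset.prod_range_succ, ih, c_succ]
    congr 1
    have h1 : ((n:ℝ) + 1) ≠ 0 := by positivity
    field_simp
    ring

lemma sin_pow_periodic (n : ℕ) : Function.Periodic (fun x : ℝ => Real.sin x ^ (2*n)) π := by
  intro x
  simp only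
  rw [Real.sin_antiperiodic x]
  exact Even.neg_pow (even_two_mul n) _

lemma integral_cos_sq_half_pow (n : ℕ) :
    (∫ φ in (0:ℝ)..(2*π), Real.cos (φ/2) ^ (2*n)) = 2 * π * c (1/2) n := by
  have h1 : (∫ φ in (0:ℝ)..(2*π), Real.cos (φ/2) ^ (2*n))
      = (2:ℝ) • ∫ x in (0:ℝ)..π, Real.cos x ^ (2*n) := by
    have := intervalIntegral.integral_comp_div (a := (0:ℝ)) (b := 2*π)
      (f := fun x => Real.cos x ^ (2*n)) (c := (2:ℝ)) two_ne_zero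
    simpa using this
  have h2 : (∫ x in (0:ℝ)..π, Real.cos x ^ (2*n))
      = ∫ x in (0:ℝ)..π, Real.sin x ^ (2*n) := by
    have e1 : (∫ x in (0:ℝ)..π, Real.cos x ^ (2*n))
        = ∫ x in (0:ℝ)..π, Real.sin (x + π/2) ^ (2*n) := by
      refine intervalIntegral.integral_congr fun x _ => ?_
      rw [Real.sin_add_pi_div_two]
    rw [e1, intervalIntegral.integral_comp_add_right (fun x => Real.sin x ^ (2*n)) (π/2)]
    have := (sin_pow_periodic n).intervalIntegral_add_eq (π/2) 0
    simp only [zero_add] at this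
    rw [show (0:ℝ) + π/2 = π/2 by ring, show π + π/2 = π/2 + π by ring]
    exact this
  rw [h1, h2, integral_sin_pow_even, prod_eq_c_half]
  simp
  ring

end RotKernelAux

open RotKernelAux


/-- The rotation-averaged Riesz `s`-kernel on the right half-plane:
`K_s(z,w) = (1/2π) ∫₀^{2π} (x² + u² - 2xu cos φ + (y-v)²)^{-s/2} dφ`,
where `z = x + iy`, `w = u + iv`. -/
noncomputable def rotKernel (s : ℝ) (z w : ℂ) : ℝ :=
  (1 / (2 * Real.pi)) * ∫ φ in (0:ℝ)..(2 * Real.pi),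
    (z.re ^ 2 + w.re ^ 2 - 2 * z.re * w.re * Real.cos φ + (z.im - w.im) ^ 2) ^ (-(s / 2))

/-- The Gauss hypergeometric function `₂F₁(a,b;c;x)` as a power series
with Pochhammer coefficients. -/
noncomputable def gaussHypergeom (a b c x : ℝ) : ℝ :=
  ∑' n : ℕ, ((ascPochhammer ℝ n).eval a * (ascPochhammer ℝ n).eval b) /
    ((ascPochhammer ℝ n).eval c * (n.factorial : ℝ)) * x ^ n

/-- Hypergeometric representation of the kernel: for `s > 0` and `z,w` in the closed right
half-plane with `z ≠ w` and `z ≠ w* = -conj w`,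
`K_s(z,w) = |z-w*|^{-s} ₂F₁(s/2, 1/2; 1; 1 - |z-w|²/|z-w*|²)`. -/
theorem rotKernel_hypergeom_repr (s : ℝ) (hs : 0 < s) (z w : ℂ)
    (hz : 0 ≤ z.re) (hw : 0 ≤ w.re) (hzw : z ≠ w)
    (hzws : z ≠ -(starRingEnd ℂ w)) :
    rotKernel s z w = ‖z - -(starRingEnd ℂ w)‖ ^ (-s) *
      gaussHypergeom (s / 2) (1 / 2) 1
        (1 - ‖z - w‖ ^ 2 / ‖z - -(starRingEnd ℂ w)‖ ^ 2) := by
  have hπ : (0:ℝ) < π := Real.pi_pos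
  have h2π : (0:ℝ) ≤ 2 * π := by linarith
  set a : ℝ := s / 2 with ha'
  have ha : 0 < a := by rw [ha']; positivity
  set A : ℝ := ‖z - -(starRingEnd ℂ w)‖ ^ 2 with hA'
  set B : ℝ := ‖z - w‖ ^ 2 with hB'
  have hzW : z - -(starRingEnd ℂ w) ≠ 0 := sub_ne_zero.2 hzws
  have hzw0 : z - w ≠ 0 := sub_ne_zero.2 hzw
  have hA : 0 < A := by rw [hA']; exact pow_pos (norm_pos_iff.mpr hzW) 2
  have hB : 0 < B := by rw [hB']; exact pow_pos (norm_pos_iff.mpr hzw0) 2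
  have hAval : A = (z.re + w.re)^2 + (z.im - w.im)^2 := by
    rw [hA', Complex.sq_norm, Complex.normSq_apply]
    simp only [Complex.sub_re, Complex.sub_im, Complex.neg_re, Complex.neg_im,
      Complex.conj_re, Complex.conj_im]
    ring
  have hBval : B = (z.re - w.re)^2 + (z.im - w.im)^2 := by
    rw [hB', Complex.sq_norm, Complex.normSq_apply]
    simp only [Complex.sub_re, Complex.sub_im]
    ring
  have hBA : B ≤ A := by
    rw [hAval, hBval]
    nlinarith [mul_nonneg hz hw]
  set ζ : ℝ := 1 - B / A with hζ'
  have hζ0 : 0 ≤ ζ := by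
    rw [hζ']
    have : B / A ≤ 1 := (div_le_one hA).2 hBA
    linarith
  have hζ1 : ζ < 1 := by
    rw [hζ']
    have : 0 < B / A := div_pos hB hA
    linarith
  clear_value A B ζ
  -- pointwise kernel identity
  have hker : ∀ φ : ℝ, z.re^2 + w.re^2 - 2*z.re*w.re*Real.cos φ + (z.im - w.im)^2
      = A * (1 - ζ * Real.cos (φ/2)^2) := by
    intro φ
    have h2 : 2*(φ/2) = φ := by ring
    have hc : Real.cos (φ/2)^2 = 1/2 + Real.cos φ / 2 := by rw [Real.cos_sq, h2]
    have hζA : ζ * A = A - B := by rw [hζ']; field_simp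
    rw [hAval, hBval] at hζA
    rw [hc, hAval]
    linear_combination (1/2 + Real.cos φ/2) * hζA
  have hζcos : ∀ φ : ℝ, ζ * Real.cos (φ/2)^2 ≤ ζ := by
    intro φ
    have hcos : Real.cos (φ/2)^2 ≤ 1 := Real.cos_sq_le_one (φ/2)
    have h1 := mul_le_mul_of_nonneg_left hcos hζ0
    simpa using h1
  have hqpos : ∀ φ : ℝ, 0 < 1 - ζ * Real.cos (φ/2)^2 := by
    intro φ
    have := hζcos φ
    linarith
  have hq0 : ∀ φ : ℝ, 0 ≤ ζ * Real.cos (φ/2)^2 := fun φ => by positivity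
  have hq1 : ∀ φ : ℝ, ζ * Real.cos (φ/2)^2 < 1 := fun φ => by
    have := hqpos φ; linarith
  -- the integrand as a series
  have hpoint : ∀ φ : ℝ,
      (z.re^2 + w.re^2 - 2*z.re*w.re*Real.cos φ + (z.im - w.im)^2) ^ (-a)
      = A ^ (-a) * ∑' n : ℕ, c a n * (ζ * Real.cos (φ/2)^2) ^ n := by
    intro φ
    rw [hker φ, Real.mul_rpow hA.le (hqpos φ).le,
      tsum_binomial ha (hq0 φ) (hq1 φ)]
  -- interchange sum and integral
  have hcont : ∀ n : ℕ, Continuous (fun φ : ℝ => c a n * (ζ * Real.cos (φ/2)^2) ^ n) := by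
    intro n; fun_prop
  have hswap : (∫ φ in (0:ℝ)..(2*π), ∑' n : ℕ, c a n * (ζ * Real.cos (φ/2)^2) ^ n)
      = ∑' n : ℕ, ∫ φ in (0:ℝ)..(2*π), c a n * (ζ * Real.cos (φ/2)^2) ^ n := by
    rw [intervalIntegral.integral_of_le h2π]
    have := MeasureTheory.integral_tsum
      (f := fun n (φ : ℝ) => c a n * (ζ * Real.cos (φ/2)^2) ^ n)
      (μ := volume.restrict (Set.Ioc (0:ℝ) (2*π)))
      (fun n => (hcont n).aestronglyMeasurable) ?_
    · rw [this]
      exact tsum_congr fun n => (intervalIntegral.integral_of_le h2π).symm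
    · have hbound : ∀ n : ℕ, (∫⁻ φ in Set.Ioc (0:ℝ) (2*π),
          ‖c a n * (ζ * Real.cos (φ/2)^2) ^ n‖₊ ∂volume)
          ≤ ENNReal.ofReal (c a n * ζ^n) * ENNReal.ofReal (2*π) := by
        intro n
        have hle : ∀ φ : ℝ, (‖c a n * (ζ * Real.cos (φ/2)^2) ^ n‖₊ : ENNReal)
            ≤ ENNReal.ofReal (c a n * ζ^n) := by
          intro φ
          rw [← enorm_eq_nnnorm, ← ofReal_norm]
          apply ENNReal.ofReal_le_ofReal
          rw [Real.norm_eq_abs, abs_of_nonneg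
            (mul_nonneg (c_pos ha n).le (pow_nonneg (hq0 φ) n))]
          exact mul_le_mul_of_nonneg_left
            (pow_le_pow_left₀ (hq0 φ) (hζcos φ) n) (c_pos ha n).le
        calc (∫⁻ φ in Set.Ioc (0:ℝ) (2*π), ‖c a n * (ζ * Real.cos (φ/2)^2) ^ n‖₊ ∂volume)
            ≤ ∫⁻ _ in Set.Ioc (0:ℝ) (2*π), ENNReal.ofReal (c a n * ζ^n) ∂volume :=
              MeasureTheory.lintegral_mono fun φ => hle φ
          _ = ENNReal.ofReal (c a n * ζ^n) * volume (Set.Ioc (0:ℝ) (2*π)) := by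
              rw [MeasureTheory.setLIntegral_const]
          _ = ENNReal.ofReal (c a n * ζ^n) * ENNReal.ofReal (2*π) := by
              rw [Real.volume_Ioc]
              norm_num
      have hsum : Summable (fun n : ℕ => c a n * ζ^n) := summable_c ha hζ0 hζ1
      have h1 : (∑' n : ℕ, (∫⁻ φ in Set.Ioc (0:ℝ) (2*π),
            ‖c a n * (ζ * Real.cos (φ/2)^2) ^ n‖₊ ∂volume))
          ≤ ∑' n : ℕ, ENNReal.ofReal (c a n * ζ^n) * ENNReal.ofReal (2*π) :=
        ENNReal.tsum_le_tsum hbound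
      refine ne_top_of_le_ne_top ?_ h1
      rw [ENNReal.tsum_mul_right, ← ENNReal.ofReal_tsum_of_nonneg
        (fun n => mul_nonneg (c_pos ha n).le (pow_nonneg hζ0 n)) hsum]
      exact ENNReal.mul_ne_top ENNReal.ofReal_ne_top ENNReal.ofReal_ne_top
  -- each term
  have hterm : ∀ n : ℕ, (∫ φ in (0:ℝ)..(2*π), c a n * (ζ * Real.cos (φ/2)^2) ^ n)
      = 2 * π * (c a n * c (1/2) n * ζ^n) := by
    intro n
    have he : ∀ φ : ℝ, c a n * (ζ * Real.cos (φ/2)^2) ^ n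
        = (c a n * ζ^n) * Real.cos (φ/2) ^ (2*n) := by
      intro φ
      rw [mul_pow, pow_mul]
      ring
    rw [intervalIntegral.integral_congr (fun φ _ => he φ),
      intervalIntegral.integral_const_mul, integral_cos_sq_half_pow]
    ring
  -- assembling
  have hI : rotKernel s z w = A ^ (-a) * ∑' n : ℕ, c a n * c (1/2) n * ζ^n := by
    rw [rotKernel]
    rw [intervalIntegral.integral_congr (fun φ _ => hpoint φ),
      intervalIntegral.integral_const_mul, hswap]
    rw [tsum_congr hterm, tsum_mul_left]
    have h2πne : (2:ℝ) * π ≠ 0 := by positivity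
    field_simp
  rw [hI]
  congr 1
  · rw [hA', ← Real.rpow_natCast (‖z - -(starRingEnd ℂ w)‖) 2,
      ← Real.rpow_mul (norm_nonneg _)]
    congr 1
    rw [ha']
    push_cast
    ring
  · rw [gaussHypergeom]
    refine (tsum_congr fun n => ?_).symm
    have hfac : ((n.factorial : ℝ)) ≠ 0 := Nat.cast_ne_zero.2 n.factorial_ne_zero
    rw [ascPochhammer_eval_one]
    simp only [c]
    field_simp
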